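/- Let z : ZMod (2t) → ℤ satisfy |z(k+1) - z(k)| = 1 and z(k+t) = t - z(k) for all k. Then the number of local minima of z equals t/2 + (1/(4t))·∑_{k=0}^{2t-1} |ẑ(k)|²·(cos²(πk/t) - cos(πk/t)). -/

import Mathlib

/-- Number of local minima of a `2t`-periodic integer sequence. -/
def minimaCount (t : ℕ) (z : ZMod (2*t) → ℤ) : ℕ :=
  ((Finset.range (2*t)).filter (fun k : ℕ =>
    z ((k : ZMod (2*t)) - 1) > z (k : ZMod (2*t)) ∧
    z ((k : ZMod (2*t)) + 1) > z (k : ZMod (2*t)))).card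

/-- Discrete Fourier transform of a `2t`-periodic sequence,
using the primitive `2t`-th root of unity `exp(-πi/t)`. -/
noncomputable def dft (t : ℕ) (z : ZMod (2*t) → ℂ) (k : ℕ) : ℂ :=
  ∑ j ∈ Finset.range (2*t),
    z (j : ZMod (2*t)) * Complex.exp (-(Real.pi : ℂ) * Complex.I * k * j / t)

section FourierAux
open Complex Finset

noncomputable def Ee (t : ℕ) (m : ℤ) : ℂ :=
  Complex.exp (-(Real.pi : ℂ) * Complex.I * m / t)

lemma Ee_add (t : ℕ) (a b : ℤ) : Ee t (a + b) = Ee t a * Ee t b := by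
  rw [Ee, Ee, Ee, ← Complex.exp_add]
  congr 1
  push_cast
  ring

lemma Ee_pow (t : ℕ) (k : ℕ) (m : ℤ) : Ee t (k * m) = (Ee t m) ^ k := by
  rw [Ee, Ee, ← Complex.exp_nat_mul]
  congr 1
  push_cast
  ring

lemma Ee_dvd_one (t : ℕ) (ht : t ≠ 0) (m : ℤ) (h : (2 * t : ℤ) ∣ m) : Ee t m = 1 := by
  obtain ⟨c, rfl⟩ := h
  rw [Ee]
  have ht' : (t : ℂ) ≠ 0 := Nat.cast_ne_zero.mpr ht
  have : -(Real.pi : ℂ) * Complex.I * ((2 * (t:ℤ) * c : ℤ) : ℂ) / t = (-c : ℤ) * (2 * Real.pi * Complex.I) := by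
    push_cast
    field_simp
  rw [this, Complex.exp_int_mul_two_pi_mul_I]

lemma Ee_congr (t : ℕ) (ht : t ≠ 0) (a b : ℤ) (h : (2 * t : ℤ) ∣ (a - b)) :
    Ee t a = Ee t b := by
  have : Ee t a = Ee t (b + (a - b)) := by ring_nf
  rw [this, Ee_add, Ee_dvd_one t ht _ h, mul_one]

lemma Ee_conj (t : ℕ) (m : ℤ) : (starRingEnd ℂ) (Ee t m) = Ee t (-m) := by
  rw [Ee, Ee, ← Complex.exp_conj]
  congr 1
  simp only [map_div₀, map_mul, map_neg, Complex.conj_I, Complex.conj_ofReal,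
    map_intCast, map_natCast]
  push_cast
  ring

lemma Ee_eq_one_iff (t : ℕ) (ht : t ≠ 0) (m : ℤ) : Ee t m = 1 ↔ (2 * t : ℤ) ∣ m := by
  constructor
  · intro h
    rw [Ee, Complex.exp_eq_one_iff] at h
    obtain ⟨n, hn⟩ := h
    have ht' : (t : ℂ) ≠ 0 := Nat.cast_ne_zero.mpr ht
    have hpi : (Real.pi : ℂ) ≠ 0 := by
      exact_mod_cast Complex.ofReal_ne_zero.mpr Real.pi_ne_zero
    have : ((m : ℂ)) = ((2 * t * (-n) : ℤ) : ℂ) := by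
      field_simp at hn
      have h2 : (Real.pi:ℂ) * Complex.I * (m : ℂ) =
          (Real.pi:ℂ) * Complex.I * ((2 * t * (-n) : ℤ) : ℂ) := by
        push_cast
        linear_combination -((Real.pi:ℂ) * Complex.I) * hn
      exact mul_left_cancel₀ (mul_ne_zero hpi Complex.I_ne_zero) h2
    exact ⟨-n, by exact_mod_cast this⟩
  · exact Ee_dvd_one t ht m

lemma Ee_orth (t : ℕ) (ht : t ≠ 0) (r : ℤ) :
    ∑ k ∈ range (2 * t), Ee t (k * r) = if (2 * t : ℤ) ∣ r then ((2 * t : ℕ) : ℂ) else 0 := by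
  by_cases h : (2 * t : ℤ) ∣ r
  · simp only [h, if_true]
    have : ∀ k ∈ range (2 * t), Ee t (k * r) = 1 := fun k _ =>
      Ee_dvd_one t ht _ (Dvd.dvd.mul_left h k)
    rw [Finset.sum_congr rfl this]
    simp
  · simp only [h, if_false]
    have hne : Ee t r ≠ 1 := fun hc => h ((Ee_eq_one_iff t ht r).mp hc)
    have : ∀ k ∈ range (2 * t), Ee t (k * r) = (Ee t r) ^ k := fun k _ => Ee_pow t k r
    rw [Finset.sum_congr rfl this, geom_sum_eq hne]
    have : Ee t r ^ (2 * t) = 1 := by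
      rw [← Ee_pow, Ee_dvd_one t ht]
      exact Dvd.dvd.mul_right dvd_rfl r
    rw [this]
    simp

section
variable (t : ℕ) (ht : t ≠ 0)

lemma zmod_dvd (x y : ZMod (2*t)) (h : x = y) (a b : ℤ) (ha : ((a : ZMod (2*t)) = x))
    (hb : ((b : ZMod (2*t)) = y)) : (2 * t : ℤ) ∣ (a - b) := by
  have : ((a - b : ℤ) : ZMod (2*t)) = 0 := by push_cast [ha, hb, h]; ring
  have := (ZMod.intCast_zmod_eq_zero_iff_dvd _ _).mp this
  exact_mod_cast this

lemma sum_range_eq_univ [NeZero (2*t)] (F : ZMod (2*t) → ℂ) (k : ℕ) :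
    ∑ j ∈ range (2*t), F (j : ZMod (2*t)) * Ee t (k * j) =
    ∑ x : ZMod (2*t), F x * Ee t (k * x.val) := by
  refine Finset.sum_nbij' (fun j => (j : ZMod (2*t))) (fun x : ZMod (2*t) => x.val) ?_ ?_ ?_ ?_ ?_
  · intros; exact Finset.mem_univ _
  · intro x _; exact Finset.mem_range.mpr (ZMod.val_lt x)
  · intro j hj; simp [ZMod.val_natCast_of_lt (Finset.mem_range.mp hj)]
  · intro x _; simp [ZMod.natCast_val, ZMod.cast_id]
  · intro j hj
    rw [ZMod.val_natCast_of_lt (Finset.mem_range.mp hj)]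
end

section
variable (t : ℕ) (ht : t ≠ 0) [NeZero (2*t)]

lemma val_shift_dvd (y : ZMod (2*t)) : (2*t : ℤ) ∣ (((y-1).val : ℤ) + 1 - y.val) := by
  have : ((((y-1).val : ℤ) + 1 - y.val : ℤ) : ZMod (2*t)) = 0 := by
    push_cast [ZMod.natCast_val, ZMod.intCast_cast, ZMod.cast_id]
    ring
  exact_mod_cast (ZMod.intCast_zmod_eq_zero_iff_dvd _ _).mp this

lemma val_shift_dvd' (y : ZMod (2*t)) : (2*t : ℤ) ∣ (((y+1).val : ℤ) - 1 - y.val) := by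
  have : ((((y+1).val : ℤ) - 1 - y.val : ℤ) : ZMod (2*t)) = 0 := by
    push_cast [ZMod.natCast_val, ZMod.intCast_cast, ZMod.cast_id]
    ring
  exact_mod_cast (ZMod.intCast_zmod_eq_zero_iff_dvd _ _).mp this

lemma shift_pos (F : ZMod (2*t) → ℂ) (k : ℕ) :
    ∑ x : ZMod (2*t), F (x+1) * Ee t (k * x.val) =
    Ee t (-k) * ∑ x : ZMod (2*t), F x * Ee t (k * x.val) := by
  have ht : t ≠ 0 := by have := NeZero.ne (2*t); omega
  rw [Finset.mul_sum]
  rw [← Equiv.sum_comp (Equiv.addRight (1 : ZMod (2*t)))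
    (fun y => Ee t (-k) * (F y * Ee t (k * y.val)))]
  apply Finset.sum_congr rfl
  intro x _
  simp only [Equiv.coe_addRight]
  have h1 : Ee t (-(k:ℤ)) * Ee t (k * (x+1).val) = Ee t (k * (x+1).val - k) := by
    rw [← Ee_add]; ring_nf
  have h2 : Ee t ((k:ℤ) * (x+1).val - k) = Ee t (k * x.val) := by
    apply Ee_congr t ht
    have := val_shift_dvd' t x
    have h3 : (k:ℤ) * (x+1).val - k - k * x.val = k * (((x+1).val : ℤ) - 1 - x.val) := by ring
    rw [h3]
    exact Dvd.dvd.mul_left this k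
  rw [← h2, ← h1]; ring

lemma shift_neg (F : ZMod (2*t) → ℂ) (k : ℕ) :
    ∑ x : ZMod (2*t), F (x-1) * Ee t (k * x.val) =
    Ee t (k) * ∑ x : ZMod (2*t), F x * Ee t (k * x.val) := by
  have ht : t ≠ 0 := by have := NeZero.ne (2*t); omega
  rw [Finset.mul_sum]
  rw [← Equiv.sum_comp (Equiv.subRight (1 : ZMod (2*t)))
    (fun y => Ee t (k) * (F y * Ee t (k * y.val)))]
  apply Finset.sum_congr rfl
  intro x _
  simp only [Equiv.subRight_apply]
  have h1 : Ee t ((k:ℤ)) * Ee t (k * (x-1).val) = Ee t (k * (x-1).val + k) := by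
    rw [← Ee_add]; ring_nf
  have h2 : Ee t ((k:ℤ) * (x-1).val + k) = Ee t (k * x.val) := by
    apply Ee_congr t ht
    have := val_shift_dvd t x
    have h3 : (k:ℤ) * (x-1).val + k - k * x.val = k * (((x-1).val : ℤ) + 1 - x.val) := by ring
    rw [h3]
    exact Dvd.dvd.mul_left this k
  rw [← h2, ← h1]; ring
end

lemma parseval (t : ℕ) (ht : t ≠ 0) (f g : ℕ → ℂ) :
    ∑ k ∈ Finset.range (2*t),
      (∑ j ∈ Finset.range (2*t), f j * Ee t (k*j)) *
        (starRingEnd ℂ) (∑ l ∈ Finset.range (2*t), g l * Ee t (k*l)) =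
    ((2*t : ℕ) : ℂ) * ∑ j ∈ Finset.range (2*t), f j * (starRingEnd ℂ) (g j) := by
  have h1 : ∀ k ∈ Finset.range (2*t),
      (∑ j ∈ Finset.range (2*t), f j * Ee t (k*j)) *
        (starRingEnd ℂ) (∑ l ∈ Finset.range (2*t), g l * Ee t (k*l)) =
      ∑ j ∈ Finset.range (2*t), ∑ l ∈ Finset.range (2*t),
        f j * (starRingEnd ℂ) (g l) * Ee t (k*((j:ℤ)-l)) := by
    intro k _
    rw [map_sum, Finset.sum_mul_sum]
    refine Finset.sum_congr rfl fun j _ => Finset.sum_congr rfl fun l _ => ?_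
    rw [map_mul, Ee_conj]
    have : ((k:ℤ) * ((j:ℤ)-l)) = (k*j : ℤ) + -(k*l : ℤ) := by push_cast; ring
    rw [this, Ee_add]
    ring
  rw [Finset.sum_congr rfl h1]
  rw [Finset.sum_comm]
  have h2 : ∀ j ∈ Finset.range (2*t),
      (∑ k ∈ Finset.range (2*t), ∑ l ∈ Finset.range (2*t),
        f j * (starRingEnd ℂ) (g l) * Ee t (k*((j:ℤ)-l))) =
      f j * (starRingEnd ℂ) (g j) * ((2*t : ℕ) : ℂ) := by
    intro j hj
    rw [Finset.sum_comm]
    have h3 : ∀ l ∈ Finset.range (2*t),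
        (∑ k ∈ Finset.range (2*t), f j * (starRingEnd ℂ) (g l) * Ee t (k*((j:ℤ)-l))) =
        if l = j then f j * (starRingEnd ℂ) (g j) * ((2*t : ℕ) : ℂ) else 0 := by
      intro l hl
      rw [← Finset.mul_sum, Ee_orth t ht]
      have hjl : ((2*t : ℤ) ∣ ((j:ℤ) - l)) ↔ l = j := by
        have hj' := Finset.mem_range.mp hj
        have hl' := Finset.mem_range.mp hl
        constructor
        · intro hd
          have h0 : ((j:ℤ) - l) = 0 :=
            Int.eq_zero_of_dvd_of_natAbs_lt_natAbs hd (by omega)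
          omega
        · rintro rfl; simp
      by_cases hc : l = j
      · subst hc
        simp [hjl]
      · rw [if_neg ((not_congr hjl).mpr hc), if_neg hc, mul_zero]
    rw [Finset.sum_congr rfl h3, Finset.sum_ite_eq' (Finset.range (2*t)) j
      (fun _ => f j * (starRingEnd ℂ) (g j) * ((2*t : ℕ) : ℂ))]
    simp [hj]
  rw [Finset.sum_congr rfl h2, ← Finset.sum_mul]
  ring

lemma Ee_re (t : ℕ) (k : ℕ) : (Ee t (k:ℤ)).re = Real.cos (Real.pi * k / t) := by
  have : Ee t (k:ℤ) = Complex.exp (((-(Real.pi * k / t) : ℝ) : ℂ) * Complex.I) := by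
    rw [Ee]; congr 1; push_cast; ring
  rw [this, Complex.exp_ofReal_mul_I_re, Real.cos_neg]

lemma Ee_im (t : ℕ) (k : ℕ) : (Ee t (k:ℤ)).im = -Real.sin (Real.pi * k / t) := by
  have : Ee t (k:ℤ) = Complex.exp (((-(Real.pi * k / t) : ℝ) : ℂ) * Complex.I) := by
    rw [Ee]; congr 1; push_cast; ring
  rw [this, Complex.exp_ofReal_mul_I_im, Real.sin_neg]

lemma normSq_one_sub_Ee (t : ℕ) (k : ℕ) :
    Complex.normSq (1 - Ee t (k:ℤ)) = 2 - 2 * Real.cos (Real.pi * k / t) := by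
  rw [Complex.normSq_apply, Complex.sub_re, Complex.sub_im, Complex.one_re, Complex.one_im,
    Ee_re, Ee_im]
  nlinarith [Real.sin_sq_add_cos_sq (Real.pi * k / t)]

lemma dft_eq (t : ℕ) (ht : t ≠ 0) [NeZero (2*t)] (F : ZMod (2*t) → ℂ) (k : ℕ) :
    dft t F k = ∑ x : ZMod (2*t), F x * Ee t (k * x.val) := by
  rw [dft, ← sum_range_eq_univ t F k]
  refine Finset.sum_congr rfl fun j _ => ?_
  congr 1
  rw [Ee]
  congr 1
  push_cast
  ring

lemma spectral (t : ℕ) (ht : t ≠ 0) [NeZero (2*t)] (z : ZMod (2*t) → ℤ) :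
    ∑ k ∈ Finset.range (2*t),
      (‖dft t (fun j => (z j : ℂ)) k‖)^2 *
        ((Real.cos (Real.pi * k / t))^2 - Real.cos (Real.pi * k / t)) =
    -(t:ℝ) * ((∑ j ∈ Finset.range (2*t),
      (z (j : ZMod (2*t)) - z ((j : ZMod (2*t)) - 1)) *
      (z ((j : ZMod (2*t)) + 1) - z (j : ZMod (2*t))) : ℤ) : ℝ) := by
  set zc : ZMod (2*t) → ℂ := fun x => ((z x : ℤ) : ℂ) with hzc
  set F : ZMod (2*t) → ℂ := fun x => ((z x - z (x-1) : ℤ) : ℂ) with hF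
  set f : ℕ → ℂ := fun j => F (j : ZMod (2*t)) with hf
  set g : ℕ → ℂ := fun j => F ((j : ZMod (2*t)) + 1) with hg
  set A : ℕ → ℂ := fun k => ∑ j ∈ Finset.range (2*t), f j * Ee t (k*j) with hA
  set B : ℕ → ℂ := fun k => ∑ j ∈ Finset.range (2*t), g j * Ee t (k*j) with hB
  -- A in terms of dft
  have hAd : ∀ k : ℕ, A k = (1 - Ee t k) * dft t zc k := by
    intro k
    have e1 : A k = ∑ x : ZMod (2*t), F x * Ee t (k * x.val) := by
      rw [hA]
      have := sum_range_eq_univ t F k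
      simpa using this
    have e2 : ∀ x : ZMod (2*t), F x * Ee t (k * x.val) =
        zc x * Ee t (k * x.val) - zc (x-1) * Ee t (k * x.val) := by
      intro x; rw [hF, hzc]; push_cast; ring
    rw [e1, Finset.sum_congr rfl (fun x _ => e2 x), Finset.sum_sub_distrib,
      shift_neg t (fun x => zc x) k, dft_eq t ht zc k]
    ring
  have hBd : ∀ k : ℕ, B k = Ee t (-(k:ℤ)) * A k := by
    intro k
    have e1 : B k = ∑ x : ZMod (2*t), F (x+1) * Ee t (k * x.val) := by
      rw [hB]
      have := sum_range_eq_univ t (fun x => F (x+1)) k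
      simpa using this
    have e2 : A k = ∑ x : ZMod (2*t), F x * Ee t (k * x.val) := by
      rw [hA]
      have := sum_range_eq_univ t F k
      simpa using this
    rw [e1, e2, shift_pos t F k]
  -- Parseval
  have hP := parseval t ht f g
  -- rewrite each term of LHS of hP
  have hterm : ∀ k ∈ Finset.range (2*t),
      A k * (starRingEnd ℂ) (B k) = Ee t (k:ℤ) * ((Complex.normSq (A k) : ℝ) : ℂ) := by
    intro k _
    rw [hBd k, map_mul, Ee_conj, neg_neg, ← Complex.mul_conj]
    ring
  have hP2 : ∑ k ∈ Finset.range (2*t), Ee t (k:ℤ) * ((Complex.normSq (A k) : ℝ) : ℂ) =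
      ((2*t : ℕ) : ℂ) * ∑ j ∈ Finset.range (2*t), f j * (starRingEnd ℂ) (g j) := by
    rw [← Finset.sum_congr rfl hterm]
    exact hP
  -- real parts
  have hRe := congrArg Complex.re hP2
  rw [Complex.re_sum] at hRe
  -- compute RHS of hRe
  have hgj : ∀ j : ℕ, f j * (starRingEnd ℂ) (g j) =
      (((z (j : ZMod (2*t)) - z ((j : ZMod (2*t)) - 1)) *
        (z ((j : ZMod (2*t)) + 1) - z (j : ZMod (2*t))) : ℤ) : ℂ) := by
    intro j
    simp only [hf, hg, hF]
    rw [map_intCast]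
    have h1 : ((j : ZMod (2*t)) + 1 - 1) = (j : ZMod (2*t)) := by ring
    rw [h1]
    push_cast
    ring
  have hRHS : ((2*t : ℕ) : ℂ) * ∑ j ∈ Finset.range (2*t), f j * (starRingEnd ℂ) (g j)
      = ((((2*t : ℕ) : ℝ) * ((∑ j ∈ Finset.range (2*t),
          (z (j : ZMod (2*t)) - z ((j : ZMod (2*t)) - 1)) *
          (z ((j : ZMod (2*t)) + 1) - z (j : ZMod (2*t))) : ℤ) : ℝ) : ℝ) : ℂ) := by
    rw [Finset.sum_congr rfl (fun j _ => hgj j)]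
    push_cast
    ring
  have hP3 := hP2.trans hRHS
  have hRe := congrArg Complex.re hP3
  rw [Complex.re_sum] at hRe
  simp only [Complex.mul_re, Complex.ofReal_re, Complex.ofReal_im, mul_zero, sub_zero] at hRe
  have hnsq : ∀ k : ℕ, Complex.normSq (A k) =
      (2 - 2 * Real.cos (Real.pi * k / t)) * Complex.normSq (dft t zc k) := by
    intro k; rw [hAd k, Complex.normSq_mul, normSq_one_sub_Ee]
  have hgoal : ∀ k ∈ Finset.range (2*t),
      (‖dft t zc k‖)^2 *
        ((Real.cos (Real.pi * k / t))^2 - Real.cos (Real.pi * k / t))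
      = -(1/2) * ((Ee t (k:ℤ)).re * Complex.normSq (A k)) := by
    intro k _
    rw [Complex.sq_norm, hnsq k, Ee_re]
    ring
  rw [Finset.sum_congr rfl hgoal, ← Finset.mul_sum, hRe]
  push_cast
  ring

lemma sum_range_zmod {n : ℕ} [NeZero n] (H : ZMod n → ℤ) :
    ∑ j ∈ Finset.range n, H (j : ZMod n) = ∑ x : ZMod n, H x := by
  refine Finset.sum_nbij' (fun j => (j : ZMod n)) (fun x : ZMod n => x.val) ?_ ?_ ?_ ?_ ?_
  · intros; exact Finset.mem_univ _
  · intro x _; exact Finset.mem_range.mpr (ZMod.val_lt x)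
  · intro j hj; simp [ZMod.val_natCast_of_lt (Finset.mem_range.mp hj)]
  · intro x _; simp [ZMod.natCast_val, ZMod.cast_id]
  · intro j hj; rfl

lemma comb (t : ℕ) (ht : t ≠ 0) [NeZero (2*t)] (z : ZMod (2*t) → ℤ)
    (hstep : ∀ k : ZMod (2*t), |z (k + 1) - z k| = 1) :
    (∑ j ∈ Finset.range (2*t),
      (z (j : ZMod (2*t)) - z ((j : ZMod (2*t)) - 1)) *
      (z ((j : ZMod (2*t)) + 1) - z (j : ZMod (2*t))) : ℤ)
    = (2*t : ℤ) - 4 * (minimaCount t z : ℤ) := by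
  have key : ∀ j ∈ Finset.range (2*t),
      (z (j : ZMod (2*t)) - z ((j : ZMod (2*t)) - 1)) *
      (z ((j : ZMod (2*t)) + 1) - z (j : ZMod (2*t)))
      = 1 + (z ((j : ZMod (2*t)) + 1) - z (j : ZMod (2*t)))
          - (z (j : ZMod (2*t)) - z ((j : ZMod (2*t)) - 1))
          - (if (z ((j : ZMod (2*t)) - 1) > z (j : ZMod (2*t)) ∧
              z ((j : ZMod (2*t)) + 1) > z (j : ZMod (2*t))) then 4 else 0) := by
    intro j _
    set x := (j : ZMod (2*t))
    have ha := hstep (x - 1)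
    rw [sub_add_cancel] at ha
    have hb := hstep x
    have ha' : z x - z (x-1) = 1 ∨ z x - z (x-1) = -1 := (abs_eq one_pos.le).mp ha
    have hb' : z (x+1) - z x = 1 ∨ z (x+1) - z x = -1 := (abs_eq one_pos.le).mp hb
    split_ifs with hc <;> rcases ha' with h1 | h1 <;>
      rcases hb' with h2 | h2 <;> rw [h1, h2] <;> omega
  rw [Finset.sum_congr rfl key]
  rw [Finset.sum_sub_distrib, Finset.sum_sub_distrib, Finset.sum_add_distrib,
    Finset.sum_const, Finset.card_range]
  have hsum_eq : ∑ j ∈ Finset.range (2*t), (z ((j : ZMod (2*t)) + 1) - z (j : ZMod (2*t)))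
      = ∑ j ∈ Finset.range (2*t), (z (j : ZMod (2*t)) - z ((j : ZMod (2*t)) - 1)) := by
    rw [sum_range_zmod (fun x => z (x + 1) - z x),
      sum_range_zmod (fun x => z x - z (x - 1))]
    rw [← Equiv.sum_comp (Equiv.addRight (1 : ZMod (2*t))) (fun y => z y - z (y - 1))]
    simp
  have hite : ∑ j ∈ Finset.range (2*t),
      (if (z ((j : ZMod (2*t)) - 1) > z (j : ZMod (2*t)) ∧
          z ((j : ZMod (2*t)) + 1) > z (j : ZMod (2*t))) then (4:ℤ) else 0)
      = 4 * (minimaCount t z : ℤ) := by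
    rw [Finset.sum_ite, Finset.sum_const, Finset.sum_const]
    simp [minimaCount, mul_comm]
  rw [hsum_eq, hite]
  push_cast
  ring


end FourierAux

theorem minima_eq_half_t_formula (t : ℕ) (ht : 2 ≤ t) (z : ZMod (2*t) → ℤ)
    (hstep : ∀ k : ZMod (2*t), |z (k + 1) - z k| = 1)
    (hant : ∀ k : ZMod (2*t), z (k + (t : ZMod (2*t))) = (t : ℤ) - z k) :
    (minimaCount t z : ℝ) =
      (t : ℝ)/2 + (1/(4*(t:ℝ))) * ∑ k ∈ Finset.range (2*t),
        (‖dft t (fun j => (z j : ℂ)) k‖)^2 *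
          ((Real.cos (Real.pi * k / t))^2 - Real.cos (Real.pi * k / t)) := by
  have ht0 : t ≠ 0 := by omega
  haveI : NeZero (2*t) := ⟨by omega⟩
  rw [spectral t ht0 z]
  have hc := comb t ht0 z hstep
  have hcR : ((∑ j ∈ Finset.range (2*t),
      (z (j : ZMod (2*t)) - z ((j : ZMod (2*t)) - 1)) *
      (z ((j : ZMod (2*t)) + 1) - z (j : ZMod (2*t))) : ℤ) : ℝ)
      = 2*(t:ℝ) - 4 * (minimaCount t z : ℝ) := by
    rw [hc]; push_cast; ring
  rw [hcR]
  have htR : (t : ℝ) ≠ 0 := Nat.cast_ne_zero.mpr ht0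
  field_simp
  ring
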